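/- Let X be a Banach space and let U be a weakly exponentially unstable evolution operator on X, with constants N ≥ 1 and ν > 0. Then for every p ≥ 1, setting K = N^p/(νp) > 0, for each x₀ ∈ X there exists t₀ ≥ 0 such that ∫_{t₀}^{t} ‖U(τ,t₀)x₀‖^p dτ ≤ K‖U(t,t₀)x₀‖^p for all t ≥ t₀. -/

import Mathlib

/-- An evolution operator on a Banach space `X`. -/
structure EvolutionOperator (X : Type*) [NormedAddCommGroup X] [NormedSpace ℝ X] where
  U : ℝ → ℝ → X →L[ℝ] X
  isId : ∀ t : ℝ, 0 ≤ t → U t t = ContinuousLinearMap.id ℝ X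
  cocycle : ∀ t s t₀ : ℝ, 0 ≤ t₀ → t₀ ≤ s → s ≤ t → ∀ x : X, U t s (U s t₀ x) = U t t₀ x
  cont : ∀ x : X, ContinuousOn (fun p : ℝ × ℝ => U p.1 p.2 x)
    {p : ℝ × ℝ | 0 ≤ p.2 ∧ p.2 ≤ p.1}

/-- If `U` is weakly exponentially unstable with constants `N ≥ 1`, `ν > 0`, then for
every `p ≥ 1`, with `K = N^p / (ν p)`, for each `x₀` there is `t₀ ≥ 0` such that
`∫_{t₀}^t ‖U(τ,t₀)x₀‖^p dτ ≤ K ‖U(t,t₀)x₀‖^p` for all `t ≥ t₀`. -/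
theorem datko_necessity
    {X : Type*} [NormedAddCommGroup X] [NormedSpace ℝ X] [CompleteSpace X]
    (E : EvolutionOperator X) (N ν : ℝ) (hN : 1 ≤ N) (hν : 0 < ν)
    (hweak : ∀ x₀ : X, ∃ t₀ : ℝ, 0 ≤ t₀ ∧ ∀ s t : ℝ, t₀ ≤ s → s ≤ t →
      N * ‖E.U t t₀ x₀‖ ≥ Real.exp (ν * (t - s)) * ‖E.U s t₀ x₀‖)
    (p : ℝ) (hp : 1 ≤ p) :
    ∀ x₀ : X, ∃ t₀ : ℝ, 0 ≤ t₀ ∧ ∀ t : ℝ, t₀ ≤ t →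
      (∫ τ in t₀..t, ‖E.U τ t₀ x₀‖ ^ p) ≤ (N ^ p / (ν * p)) * ‖E.U t t₀ x₀‖ ^ p := by

  intro x₀
  obtain ⟨t₀, ht₀, h⟩ := hweak x₀
  refine ⟨t₀, ht₀, fun t ht => ?_⟩
  set c : ℝ := ν * p with hc
  have hp0 : 0 < p := lt_of_lt_of_le one_pos hp
  have hc0 : 0 < c := mul_pos hν hp0
  have hN0 : 0 ≤ N := le_trans zero_le_one hN
  -- continuity of the integrand
  have hcontU : ContinuousOn (fun τ : ℝ => ‖E.U τ t₀ x₀‖ ^ p) (Set.Icc t₀ t) := by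
    have h1 : ContinuousOn (fun τ : ℝ => E.U τ t₀ x₀) (Set.Icc t₀ t) := by
      have := E.cont x₀
      have hmap : ContinuousOn (fun τ : ℝ => ((τ, t₀) : ℝ × ℝ)) (Set.Icc t₀ t) :=
        (continuous_id.prodMk continuous_const).continuousOn
      exact this.comp hmap (fun τ hτ => ⟨ht₀, hτ.1⟩)
    apply ContinuousOn.rpow_const (h1.norm)
    intro τ hτ; right; linarith
  have hint_f : IntervalIntegrable (fun τ : ℝ => ‖E.U τ t₀ x₀‖ ^ p)
      MeasureTheory.volume t₀ t := by
    apply ContinuousOn.intervalIntegrable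
    rwa [Set.uIcc_of_le ht]
  set M : ℝ := N ^ p * ‖E.U t t₀ x₀‖ ^ p with hM
  have hg_cont : Continuous (fun τ : ℝ => M * Real.exp (c * (τ - t))) := by
    continuity
  have hint_g : IntervalIntegrable (fun τ : ℝ => M * Real.exp (c * (τ - t)))
      MeasureTheory.volume t₀ t := hg_cont.intervalIntegrable t₀ t
  -- pointwise bound
  have hpt : ∀ τ ∈ Set.Icc t₀ t, ‖E.U τ t₀ x₀‖ ^ p ≤ M * Real.exp (c * (τ - t)) := by
    intro τ hτ
    have hb := h τ t hτ.1 hτ.2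
    have hepos : (0:ℝ) < Real.exp (ν * (t - τ)) := Real.exp_pos _
    have hle : ‖E.U τ t₀ x₀‖ ≤ N * ‖E.U t t₀ x₀‖ * Real.exp (ν * (τ - t)) := by
      rw [show ν * (τ - t) = -(ν * (t - τ)) by ring, Real.exp_neg,
        ← div_eq_mul_inv, le_div_iff₀ hepos, mul_comm]
      exact hb
    have := Real.rpow_le_rpow (norm_nonneg _) hle (le_of_lt hp0)
    calc ‖E.U τ t₀ x₀‖ ^ p ≤ (N * ‖E.U t t₀ x₀‖ * Real.exp (ν * (τ - t))) ^ p := this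
      _ = M * Real.exp (c * (τ - t)) := by
          rw [Real.mul_rpow (by positivity) (Real.exp_pos _).le,
            Real.mul_rpow hN0 (norm_nonneg _), ← Real.exp_mul, hc, hM]
          ring_nf
  have hmono := intervalIntegral.integral_mono_on ht hint_f hint_g hpt
  -- compute the exponential integral
  have hcalc : (∫ τ in t₀..t, Real.exp (c * (τ - t)))
      = c⁻¹ * (Real.exp (c * (t - t)) - Real.exp (c * (t₀ - t))) := by
    have h1 : (∫ τ in t₀..t, Real.exp (c * (τ - t)))
        = ∫ u in (t₀ - t)..(t - t), Real.exp (c * u) := by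
      rw [← intervalIntegral.integral_comp_sub_right (fun u => Real.exp (c * u)) t]
    rw [h1, intervalIntegral.integral_comp_mul_left (fun u => Real.exp u) (ne_of_gt hc0),
      integral_exp]
    simp [smul_eq_mul]
  have hgint : (∫ τ in t₀..t, M * Real.exp (c * (τ - t)))
      = M * (c⁻¹ * (Real.exp (c * (t - t)) - Real.exp (c * (t₀ - t)))) := by
    rw [intervalIntegral.integral_const_mul, hcalc]
  have hbound : M * (c⁻¹ * (Real.exp (c * (t - t)) - Real.exp (c * (t₀ - t))))
      ≤ N ^ p / (ν * p) * ‖E.U t t₀ x₀‖ ^ p := by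
    have hM0 : 0 ≤ M := by positivity
    have h2 : c⁻¹ * (Real.exp (c * (t - t)) - Real.exp (c * (t₀ - t))) ≤ c⁻¹ := by
      rw [sub_self, mul_zero, Real.exp_zero]
      have := (Real.exp_pos (c * (t₀ - t))).le
      have hci : (0:ℝ) ≤ c⁻¹ := (inv_pos.mpr hc0).le
      nlinarith
    calc M * (c⁻¹ * (Real.exp (c * (t - t)) - Real.exp (c * (t₀ - t))))
        ≤ M * c⁻¹ := by nlinarith [(inv_pos.mpr hc0).le]
      _ = N ^ p / (ν * p) * ‖E.U t t₀ x₀‖ ^ p := by rw [hM, hc]; ring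
  linarith [hmono, hgint ▸ hmono]
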